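/- Every connected P5-free triangle-free graph G on at least 2 vertices (in particular, every connected P5-free bipartite graph on at least 2 vertices) has a dominating set D with 2 ≤ |D| ≤ 3 such that the induced subgraph G[D] is isomorphic to a path (on two or three vertices). -/

import Mathlib

open SimpleGraph

/-- A graph is `P₅`-free if it contains no induced subgraph isomorphic to the
path on five vertices (i.e. no graph embedding of `pathGraph 5`). -/
def P5Free {V : Type*} (G : SimpleGraph V) : Prop :=
  IsEmpty (SimpleGraph.pathGraph 5 ↪g G)

set_option linter.unusedSectionVars false
set_option linter.unreachableTactic false
set_option linter.unusedTactic false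

namespace P5Aux

variable {V : Type*} [Fintype V] [DecidableEq V] (G : SimpleGraph V)

lemma tri (htri : G.CliqueFree 3) {a b c : V} (hab : G.Adj a b) (hbc : G.Adj b c)
    (hac : G.Adj a c) : False :=
  htri {a, b, c} (SimpleGraph.is3Clique_triple_iff.2 ⟨hab, hac, hbc⟩)

lemma noP5 (hP5 : P5Free G) {a b c d e : V}
    (hab : G.Adj a b) (hbc : G.Adj b c) (hcd : G.Adj c d) (hde : G.Adj d e)
    (hac : ¬G.Adj a c) (had : ¬G.Adj a d) (hae : ¬G.Adj a e)
    (hbd : ¬G.Adj b d) (hbe : ¬G.Adj b e) (hce : ¬G.Adj c e) : False := by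
  have nab : a ≠ b := hab.ne
  have nbc : b ≠ c := hbc.ne
  have ncd : c ≠ d := hcd.ne
  have nde : d ≠ e := hde.ne
  have nac : a ≠ c := by rintro rfl; exact had hcd
  have nad : a ≠ d := by rintro rfl; exact hae hde
  have nae : a ≠ e := by rintro rfl; exact had hde.symm
  have nbd : b ≠ d := by rintro rfl; exact hbe hde
  have nbe : b ≠ e := by rintro rfl; exact hae hab
  have nce : c ≠ e := by rintro rfl; exact hbe hbc
  have hba := hab.symm; have hcb := hbc.symm; have hdc := hcd.symm; have hed := hde.symm
  have hca : ¬G.Adj c a := fun h => hac h.symm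
  have hda : ¬G.Adj d a := fun h => had h.symm
  have hea : ¬G.Adj e a := fun h => hae h.symm
  have hdb : ¬G.Adj d b := fun h => hbd h.symm
  have heb : ¬G.Adj e b := fun h => hbe h.symm
  have hec : ¬G.Adj e c := fun h => hce h.symm
  have h : IsEmpty (SimpleGraph.pathGraph 5 ↪g G) := hP5
  refine h.false ⟨⟨![a, b, c, d, e], ?_⟩, ?_⟩
  · intro i j hij
    fin_cases i <;> fin_cases j <;> simp_all
  · intro i j
    change G.Adj (![a, b, c, d, e] i) (![a, b, c, d, e] j) ↔ (SimpleGraph.pathGraph 5).Adj i j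
    fin_cases i <;> fin_cases j <;>
      simp_all [SimpleGraph.pathGraph_adj, G.irrefl] <;> decide

lemma walk_boundary {P : V → Prop} {u x : V} (p : G.Walk u x) (hu : ¬P u) (hx : P x) :
    ∃ w z, G.Adj w z ∧ ¬P w ∧ P z := by
  induction p with
  | nil => exact absurd hx hu
  | @cons u v x h p ih =>
    by_cases hv : P v
    · exact ⟨u, v, h, hu, hv⟩
    · exact ih hv hx

lemma exists_edge (hconn : G.Connected) (hcard : 2 ≤ Fintype.card V) :
    ∃ a b : V, G.Adj a b := by
  obtain ⟨u, v, huv⟩ := Fintype.exists_pair_of_one_lt_card (α := V) (by omega)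
  obtain ⟨p⟩ := hconn.preconnected u v
  cases p with
  | nil => exact absurd rfl huv
  | cons h _ => exact ⟨_, _, h⟩

open scoped Classical in
noncomputable def ND (D : Finset V) : Finset V :=
  Finset.univ.filter (fun v => v ∈ D ∨ ∃ d ∈ D, G.Adj v d)

lemma mem_ND {D : Finset V} {v : V} : v ∈ ND G D ↔ v ∈ D ∨ ∃ d ∈ D, G.Adj v d := by
  classical
  simp [ND]

lemma not_mem_ND {D : Finset V} {t : V} (h : t ∉ ND G D) :
    t ∉ D ∧ ∀ d ∈ D, ¬G.Adj t d := by
  rw [mem_ND] at h; push_neg at h; exact h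

def GoodT (D : Finset V) : Prop :=
  ∃ a b c, G.Adj a b ∧ G.Adj b c ∧ ¬G.Adj a c ∧ a ≠ c ∧ D = {a, b, c}

lemma iso2 {a b : V} (hab : G.Adj a b) :
    Nonempty (G.induce ({a, b} : Set V) ≃g SimpleGraph.pathGraph 2) := by
  have hne : a ≠ b := hab.ne
  let f : Fin 2 → ({a, b} : Set V) := ![⟨a, by simp⟩, ⟨b, by simp⟩]
  have hbij : Function.Bijective f := by
    constructor
    · intro i j hij
      fin_cases i <;> fin_cases j <;> simp_all [f]
    · rintro ⟨x, hx⟩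
      rcases hx with rfl | rfl
      · exact ⟨0, rfl⟩
      · exact ⟨1, rfl⟩
  refine ⟨(RelIso.mk (Equiv.ofBijective f hbij) ?_).symm⟩
  intro i j
  fin_cases i <;> fin_cases j <;>
    simp_all [f, SimpleGraph.pathGraph_adj, hab, hab.symm, G.irrefl] <;> decide

lemma iso3 {a b c : V} (hab : G.Adj a b) (hbc : G.Adj b c) (hac : ¬G.Adj a c)
    (hne : a ≠ c) :
    Nonempty (G.induce ({a, b, c} : Set V) ≃g SimpleGraph.pathGraph 3) := by
  have h1 : a ≠ b := hab.ne
  have h2 : b ≠ c := hbc.ne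
  have hca : ¬G.Adj c a := fun h => hac h.symm
  let f : Fin 3 → ({a, b, c} : Set V) := ![⟨a, by simp⟩, ⟨b, by simp⟩, ⟨c, by simp⟩]
  have hbij : Function.Bijective f := by
    constructor
    · intro i j hij
      fin_cases i <;> fin_cases j <;> simp_all [f]
    · rintro ⟨x, hx⟩
      rcases hx with rfl | rfl | rfl
      · exact ⟨0, rfl⟩
      · exact ⟨1, rfl⟩
      · exact ⟨2, rfl⟩
  refine ⟨(RelIso.mk (Equiv.ofBijective f hbij) ?_).symm⟩
  intro i j
  fin_cases i <;> fin_cases j <;>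
    simp_all [f, SimpleGraph.pathGraph_adj, hab, hab.symm, hbc, hbc.symm, G.irrefl] <;> decide

lemma pair_step (hP5 : P5Free G) (htri : G.CliqueFree 3) {a b w z : V}
    (hab : G.Adj a b) (hwz : G.Adj w z) (hza : G.Adj z a)
    (hw : w ∉ ND G {a, b}) :
    GoodT G {w, z, a} ∧ ND G {a, b} ⊆ ND G {w, z, a} ∧ w ∈ ND G {w, z, a} := by
  obtain ⟨hwD, hwadj⟩ := not_mem_ND G hw
  have hwa : ¬G.Adj w a := hwadj a (by simp)
  have hwb : ¬G.Adj w b := hwadj b (by simp)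
  have hwnea : w ≠ a := fun h => hwD (by simp [h])
  refine ⟨⟨w, z, a, hwz, hza, hwa, hwnea, rfl⟩, ?_, (mem_ND G).2 (Or.inl (by simp))⟩
  intro t ht
  rcases (mem_ND G).1 ht with htD | ⟨d, hd, htd⟩
  · simp only [Finset.mem_insert, Finset.mem_singleton] at htD
    rcases htD with rfl | rfl
    · exact (mem_ND G).2 (Or.inl (by simp))
    · exact (mem_ND G).2 (Or.inr ⟨a, by simp, hab.symm⟩)
  · simp only [Finset.mem_insert, Finset.mem_singleton] at hd
    rcases hd with rfl | rfl
    · exact (mem_ND G).2 (Or.inr ⟨d, by simp, htd⟩)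
    · by_cases h1 : t ∈ ND G {w, z, a}
      · exact h1
      · exfalso
        obtain ⟨htD', htadj⟩ := not_mem_ND G h1
        have htw : ¬G.Adj t w := htadj w (by simp)
        have htz : ¬G.Adj t z := htadj z (by simp)
        have hta : ¬G.Adj t a := htadj a (by simp)
        exact noP5 G hP5 hwz hza hab htd.symm hwa hwb
          (fun h => htw h.symm) (fun h => tri G htri hza hab h)
          (fun h => htz h.symm) (fun h => hta h.symm)

lemma triple_step (hP5 : P5Free G) (htri : G.CliqueFree 3) {p1 p2 p3 w z : V}
    (h12 : G.Adj p1 p2) (h23 : G.Adj p2 p3) (h13 : ¬G.Adj p1 p3) (hn13 : p1 ≠ p3)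
    (hwz : G.Adj w z) (hz : G.Adj z p1 ∨ G.Adj z p2 ∨ G.Adj z p3)
    (hw : w ∉ ND G {p1, p2, p3}) :
    ∃ D', GoodT G D' ∧ ND G {p1, p2, p3} ⊆ ND G D' ∧ w ∈ ND G D' := by
  obtain ⟨hwD, hwadj⟩ := not_mem_ND G hw
  have hw1 : ¬G.Adj w p1 := hwadj p1 (by simp)
  have hw2 : ¬G.Adj w p2 := hwadj p2 (by simp)
  have hw3 : ¬G.Adj w p3 := hwadj p3 (by simp)
  by_cases hz2 : G.Adj z p2
  · -- new triple {w, z, p2}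
    refine ⟨{w, z, p2}, ⟨w, z, p2, hwz, hz2, hw2, fun h => hwD (by simp [h]), rfl⟩,
      ?_, (mem_ND G).2 (Or.inl (by simp))⟩
    intro t ht
    rcases (mem_ND G).1 ht with htD | ⟨d, hd, htd⟩
    · simp only [Finset.mem_insert, Finset.mem_singleton] at htD
      rcases htD with rfl | rfl | rfl
      · exact (mem_ND G).2 (Or.inr ⟨p2, by simp, h12⟩)
      · exact (mem_ND G).2 (Or.inl (by simp))
      · exact (mem_ND G).2 (Or.inr ⟨p2, by simp, h23.symm⟩)
    · simp only [Finset.mem_insert, Finset.mem_singleton] at hd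
      by_cases h1 : t ∈ ND G {w, z, p2}
      · exact h1
      · exfalso
        obtain ⟨htD', htadj⟩ := not_mem_ND G h1
        have htw : ¬G.Adj t w := htadj w (by simp)
        have htz : ¬G.Adj t z := htadj z (by simp)
        have htp2 : ¬G.Adj t p2 := htadj p2 (by simp)
        rcases hd with rfl | rfl | rfl
        · exact noP5 G hP5 hwz hz2 h12.symm htd.symm hw2 hw1
            (fun h => htw h.symm) (fun h => tri G htri hz2 h12.symm h)
            (fun h => htz h.symm) (fun h => htp2 h.symm)
        · exact htp2 htd
        · exact noP5 G hP5 hwz hz2 h23 htd.symm hw2 hw3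
            (fun h => htw h.symm) (fun h => tri G htri hz2 h23 h)
            (fun h => htz h.symm) (fun h => htp2 h.symm)
  · by_cases hz1 : G.Adj z p1 <;> by_cases hz3 : G.Adj z p3
    · -- z adjacent to both p1 and p3
      by_cases hcov : ∀ t, G.Adj t p1 → t ∈ ND G {w, z, p3}
      · -- new triple {w, z, p3}
        refine ⟨{w, z, p3}, ⟨w, z, p3, hwz, hz3, hw3, fun h => hwD (by simp [h]), rfl⟩,
          ?_, (mem_ND G).2 (Or.inl (by simp))⟩
        intro t ht
        rcases (mem_ND G).1 ht with htD | ⟨d, hd, htd⟩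
        · simp only [Finset.mem_insert, Finset.mem_singleton] at htD
          rcases htD with rfl | rfl | rfl
          · exact (mem_ND G).2 (Or.inr ⟨z, by simp, hz1.symm⟩)
          · exact (mem_ND G).2 (Or.inr ⟨p3, by simp, h23⟩)
          · exact (mem_ND G).2 (Or.inl (by simp))
        · simp only [Finset.mem_insert, Finset.mem_singleton] at hd
          rcases hd with rfl | rfl | rfl
          · exact hcov t htd
          · by_cases h1 : t ∈ ND G {w, z, p3}
            · exact h1
            · exfalso
              obtain ⟨htD', htadj⟩ := not_mem_ND G h1
              have htw : ¬G.Adj t w := htadj w (by simp)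
              have htz : ¬G.Adj t z := htadj z (by simp)
              exact noP5 G hP5 hwz hz1 h12 htd.symm hw1 hw2
                (fun h => htw h.symm) hz2 (fun h => htz h.symm)
                (fun h => tri G htri h12 htd.symm h)
          · exact (mem_ND G).2 (Or.inr ⟨_, by simp, htd⟩)
      · push_neg at hcov
        obtain ⟨t, ht1, ht2⟩ := hcov
        obtain ⟨htD0, htadj0⟩ := not_mem_ND G ht2
        have htw : ¬G.Adj t w := htadj0 w (by simp)
        have htz : ¬G.Adj t z := htadj0 z (by simp)
        have htp3 : ¬G.Adj t p3 := htadj0 p3 (by simp)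
        -- new triple {w, z, p1}
        refine ⟨{w, z, p1}, ⟨w, z, p1, hwz, hz1, hw1, fun h => hwD (by simp [h]), rfl⟩,
          ?_, (mem_ND G).2 (Or.inl (by simp))⟩
        intro t' ht'
        rcases (mem_ND G).1 ht' with htD | ⟨d, hd, htd⟩
        · simp only [Finset.mem_insert, Finset.mem_singleton] at htD
          rcases htD with rfl | rfl | rfl
          · exact (mem_ND G).2 (Or.inl (by simp))
          · exact (mem_ND G).2 (Or.inr ⟨p1, by simp, h12.symm⟩)
          · exact (mem_ND G).2 (Or.inr ⟨z, by simp, hz3.symm⟩)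
        · simp only [Finset.mem_insert, Finset.mem_singleton] at hd
          by_cases h1 : t' ∈ ND G {w, z, p1}
          · exact h1
          · exfalso
            obtain ⟨htD', htadj⟩ := not_mem_ND G h1
            have ht'w : ¬G.Adj t' w := htadj w (by simp)
            have ht'z : ¬G.Adj t' z := htadj z (by simp)
            have ht'p1 : ¬G.Adj t' p1 := htadj p1 (by simp)
            rcases hd with rfl | rfl | rfl
            · exact ht'p1 htd
            · exact noP5 G hP5 hwz hz3 h23.symm htd.symm hw3 hw2
                (fun h => ht'w h.symm) hz2 (fun h => ht'z h.symm)
                (fun h => tri G htri h23.symm htd.symm h)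
            · by_cases htt : G.Adj t t'
              · exact noP5 G hP5 hwz hz1 ht1.symm htt hw1
                  (fun h => htw h.symm) (fun h => ht'w h.symm)
                  (fun h => htz h.symm) (fun h => ht'z h.symm)
                  (fun h => ht'p1 h.symm)
              · exact noP5 G hP5 ht1 h12 h23 htd.symm
                  (fun h => tri G htri ht1 h12 h) htp3 htt h13
                  (fun h => ht'p1 h.symm) (fun h => tri G htri h23 htd.symm h)
    · -- z adjacent to p1 only : direct P5
      exact absurd (noP5 G hP5 hwz hz1 h12 h23 hw1 hw2 hw3 hz2 hz3 h13) id
    · -- z adjacent to p3 only : direct P5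
      exact absurd (noP5 G hP5 hwz hz3 h23.symm h12.symm hw3 hw2 hw1 hz2 hz1
        (fun h => h13 h.symm)) id
    · rcases hz with h | h | h <;> [exact absurd h hz1; exact absurd h hz2;
        exact absurd h hz3]

end P5Aux

theorem dominating_short_path_in_P5_free_triangle_free
    {V : Type*} [Fintype V] [DecidableEq V] (G : SimpleGraph V)
    (hconn : G.Connected) (hP5 : P5Free G) (htri : G.CliqueFree 3)
    (hcard : 2 ≤ Fintype.card V) :
    ∃ D : Finset V,
      2 ≤ D.card ∧ D.card ≤ 3 ∧
      (∀ v : V, v ∈ D ∨ ∃ d ∈ D, G.Adj v d) ∧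
      Nonempty (G.induce (↑D : Set V) ≃g SimpleGraph.pathGraph D.card) := by
  classical
  obtain ⟨a0, b0, hab0⟩ := P5Aux.exists_edge G hconn hcard
  set Good : Finset V → Prop := fun D =>
    (∃ a b, G.Adj a b ∧ D = {a, b}) ∨ P5Aux.GoodT G D with hGoodDef
  have hT : (Finset.univ.filter Good).Nonempty :=
    ⟨{a0, b0}, Finset.mem_filter.2 ⟨Finset.mem_univ _, Or.inl ⟨a0, b0, hab0, rfl⟩⟩⟩
  obtain ⟨D, hDmem, hmax⟩ :=
    Finset.exists_max_image (Finset.univ.filter Good)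
      (fun D => (P5Aux.ND G D).card) hT
  have hDGood : Good D := (Finset.mem_filter.1 hDmem).2
  have hmax' : ∀ D', Good D' → (P5Aux.ND G D').card ≤ (P5Aux.ND G D).card :=
    fun D' h => hmax D' (Finset.mem_filter.2 ⟨Finset.mem_univ _, h⟩)
  have hbeat : ∀ D', P5Aux.GoodT G D' → P5Aux.ND G D ⊆ P5Aux.ND G D' →
      ∀ w, w ∈ P5Aux.ND G D' → w ∉ P5Aux.ND G D → False := by
    intro D' hg hsub w hw1 hw2
    have hlt : (P5Aux.ND G D).card < (P5Aux.ND G D').card :=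
      Finset.card_lt_card ⟨hsub, fun h => hw2 (h hw1)⟩
    exact absurd (hmax' D' (Or.inr hg)) (not_le.2 hlt)
  have hdom : ∀ v, v ∈ P5Aux.ND G D := by
    by_contra hcon
    push_neg at hcon
    obtain ⟨u, hu⟩ := hcon
    obtain ⟨a1, ha1⟩ : ∃ a, a ∈ D := by
      rcases hDGood with ⟨a, b, _, rfl⟩ | ⟨a, b, c, _, _, _, _, rfl⟩ <;>
        exact ⟨a, by simp⟩
    obtain ⟨p⟩ := hconn.preconnected u a1
    obtain ⟨w, z, hwz, hwP, hzP⟩ :=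
      P5Aux.walk_boundary (P := fun v => v ∈ P5Aux.ND G D) G p hu
        ((P5Aux.mem_ND G).2 (Or.inl ha1))
    rcases (P5Aux.mem_ND G).1 hzP with hzD | ⟨q, hq, hzq⟩
    · exact hwP ((P5Aux.mem_ND G).2 (Or.inr ⟨z, hzD, hwz⟩))
    · rcases hDGood with ⟨a, b, hab, rfl⟩ | ⟨p1, p2, p3, h12, h23, h13, hn13, rfl⟩
      · have hq' : q = a ∨ q = b := by simpa using hq
        rcases hq' with rfl | rfl
        · obtain ⟨hg, hsub, hwin⟩ := P5Aux.pair_step G hP5 htri hab hwz hzq hwP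
          exact hbeat _ hg hsub w hwin hwP
        · have he : ({a, q} : Finset V) = {q, a} := Finset.pair_comm a q
          have hwPs : w ∉ P5Aux.ND G {q, a} := by rw [← he]; exact hwP
          obtain ⟨hg, hsub, hwin⟩ := P5Aux.pair_step G hP5 htri hab.symm hwz hzq hwPs
          rw [← he] at hsub
          exact hbeat _ hg hsub w hwin hwP
      · have hq' : q = p1 ∨ q = p2 ∨ q = p3 := by simpa using hq
        have hz3 : G.Adj z p1 ∨ G.Adj z p2 ∨ G.Adj z p3 := by
          rcases hq' with rfl | rfl | rfl
          exacts [Or.inl hzq, Or.inr (Or.inl hzq), Or.inr (Or.inr hzq)]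
        obtain ⟨D', hg, hsub, hwin⟩ :=
          P5Aux.triple_step G hP5 htri h12 h23 h13 hn13 hwz hz3 hwP
        exact hbeat D' hg hsub w hwin hwP
  rcases hDGood with ⟨a, b, hab, rfl⟩ | ⟨a, b, c, hab, hbc, hac, hnac, rfl⟩
  · have hc2 : ({a, b} : Finset V).card = 2 := by
      rw [Finset.card_insert_of_notMem (by simp [hab.ne]), Finset.card_singleton]
    refine ⟨{a, b}, by norm_num [hc2], by norm_num [hc2],
      fun v => (P5Aux.mem_ND G).1 (hdom v), ?_⟩
    rw [hc2, show (↑({a, b} : Finset V) : Set V) = {a, b} by simp]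
    exact P5Aux.iso2 G hab
  · have hc3 : ({a, b, c} : Finset V).card = 3 := by
      rw [Finset.card_insert_of_notMem (by simp [hab.ne, hnac]),
        Finset.card_insert_of_notMem (by simp [hbc.ne]), Finset.card_singleton]
    refine ⟨{a, b, c}, by norm_num [hc3], by norm_num [hc3],
      fun v => (P5Aux.mem_ND G).1 (hdom v), ?_⟩
    rw [hc3, show (↑({a, b, c} : Finset V) : Set V) = {a, b, c} by simp]
    exact P5Aux.iso3 G hab hbc hac hnac
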